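/- (When the malicious agent measures 1, the receiver's qubit collapses to |0⟩ and the message is destroyed, not leaked.) Let |Φ⟩₁ ∈ EuclideanSpace ℂ (Fin 4 → ZMod 2) be the state obtained by applying CNOT (control s₁, target s₂) and then Hadamard on s₁ to (α|0⟩ + β|1⟩) ⊗ W₃, with qubits ordered (s₁, s₂, r, m) and α, β ∈ ℂ. Then the component of |Φ⟩₁ supported on bitstrings with m-bit equal to 1 is exactly (1/√6)(α|00⟩ + β|01⟩ + α|10⟩ − β|11⟩)_{s₁s₂} ⊗ |0⟩_r ⊗ |1⟩_m; in particular this component is a product state across the cut (s₁s₂ | r | m) in which the receiver's qubit r is in the state |0⟩ regardless of α and β. -/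

import Mathlib

/-- Amplitude of the 3-qubit W state at bitstring `(a, b, c)`. -/
noncomputable def w3amp (a b c : ZMod 2) : ℂ :=
  if (a = 1 ∧ b = 0 ∧ c = 0) ∨ (a = 0 ∧ b = 1 ∧ c = 0) ∨ (a = 0 ∧ b = 0 ∧ c = 1)
  then ((1 / Real.sqrt 3 : ℝ) : ℂ) else 0

/-- The joint state `φ ⊗ W₃` with `φ = α|0⟩ + β|1⟩` on qubit `s₁ = 0` and the
3-qubit W state on qubits `(s₂, r, m) = (1, 2, 3)`. -/
noncomputable def jointState (α β : ℂ) : EuclideanSpace ℂ (Fin 4 → ZMod 2) :=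
  WithLp.toLp 2 (fun x => (if x 0 = 0 then α else β) * w3amp (x 1) (x 2) (x 3))

/-- CNOT with control qubit `0` and target qubit `1` (a self-inverse basis permutation). -/
noncomputable def cnot01 (ψ : EuclideanSpace ℂ (Fin 4 → ZMod 2)) :
    EuclideanSpace ℂ (Fin 4 → ZMod 2) :=
  WithLp.toLp 2 (fun x => ψ (Function.update x 1 (x 1 + x 0)))

/-- Hadamard gate on qubit `0`. -/
noncomputable def had0 (ψ : EuclideanSpace ℂ (Fin 4 → ZMod 2)) :
    EuclideanSpace ℂ (Fin 4 → ZMod 2) :=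
  WithLp.toLp 2 (fun x => ((1 / Real.sqrt 2 : ℝ) : ℂ) *
    (ψ (Function.update x 0 0) + (if x 0 = 0 then 1 else -1) * ψ (Function.update x 0 1)))

/-- The state `|Φ⟩₁` obtained by applying CNOT (control `s₁`, target `s₂`) and then
Hadamard on `s₁` to `(α|0⟩ + β|1⟩) ⊗ W₃`. -/
noncomputable def Phi1 (α β : ℂ) : EuclideanSpace ℂ (Fin 4 → ZMod 2) :=
  had0 (cnot01 (jointState α β))

/-- Computational-basis vector `|b₀b₁b₂b₃⟩`. -/
noncomputable def ket4 (b0 b1 b2 b3 : ZMod 2) : EuclideanSpace ℂ (Fin 4 → ZMod 2) :=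
  EuclideanSpace.single ![b0, b1, b2, b3] 1

lemma z2 (a : ZMod 2) : a = 0 ∨ a = 1 := by revert a; decide

lemma sqrt6 : ((Real.sqrt 2 : ℝ) : ℂ)⁻¹ * ((Real.sqrt 3 : ℝ) : ℂ)⁻¹ = ((Real.sqrt 6 : ℝ) : ℂ)⁻¹ := by
  rw [← Complex.ofReal_inv, ← Complex.ofReal_inv, ← Complex.ofReal_inv, ← Complex.ofReal_mul,
    ← mul_inv, ← Real.sqrt_mul (by norm_num)]
  norm_num

lemma key (α β : ℂ) (x : Fin 4 → ZMod 2) :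
    (if x 3 = 1 then Phi1 α β x else 0) =
      ((1 / Real.sqrt 6 : ℝ) : ℂ) *
        (if x 2 = 0 ∧ x 3 = 1 then (if x 1 = 0 then α else if x 0 = 0 then β else -β) else 0) := by
  rcases z2 (x 0) with h0|h0 <;> rcases z2 (x 1) with h1|h1 <;>
    rcases z2 (x 2) with h2|h2 <;> rcases z2 (x 3) with h3|h3 <;>
  · have hx : x = ![x 0, x 1, x 2, x 3] := by
      funext i; fin_cases i <;> simp
    rw [hx] at *
    simp only [Phi1, had0, cnot01, jointState, w3amp, WithLp.ofLp_toLp, h0, h1, h2, h3] at *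
    simp (config := { decide := true }) [Function.update,
      show (2:ZMod 2) = 0 by decide, show (3:ZMod 2) = 1 by decide] <;>
      ring_nf <;> simp [← sqrt6] <;> ring

theorem stmt11 (α β : ℂ) :
    ((WithLp.toLp 2 (fun x : Fin 4 → ZMod 2 => if x 3 = 1 then Phi1 α β x else 0) :
        EuclideanSpace ℂ (Fin 4 → ZMod 2)) =
      ((1 / Real.sqrt 6 : ℝ) : ℂ) •
        (α • ket4 0 0 0 1 + β • ket4 0 1 0 1 + α • ket4 1 0 0 1 - β • ket4 1 1 0 1)) ∧
    ∃ f : ZMod 2 → ZMod 2 → ℂ, ∀ x : Fin 4 → ZMod 2,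
      (if x 3 = 1 then Phi1 α β x else 0) =
        f (x 0) (x 1) * (if x 2 = 0 then 1 else 0) * (if x 3 = 1 then 1 else 0) := by
  constructor
  · ext x
    show (if x 3 = 1 then Phi1 α β x else 0) = _
    rw [key]
    rcases z2 (x 0) with h0|h0 <;> rcases z2 (x 1) with h1|h1 <;>
      rcases z2 (x 2) with h2|h2 <;> rcases z2 (x 3) with h3|h3 <;>
    · have hx : x = ![x 0, x 1, x 2, x 3] := by
        funext i; fin_cases i <;> simp
      rw [hx] at *
      simp (config := { decide := true }) [ket4, EuclideanSpace.single_apply,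
        h0, h1, h2, h3] <;> ring
  · refine ⟨fun a b => ((1 / Real.sqrt 6 : ℝ) : ℂ) *
      (if b = 0 then α else if a = 0 then β else -β), fun x => ?_⟩
    rw [key]
    rcases z2 (x 2) with h2|h2 <;> rcases z2 (x 3) with h3|h3 <;>
      simp [h2, h3, show (1:ZMod 2) ≠ 0 by decide] <;> ring
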